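/- Let η > 0 and γ ≥ 0, and let x_z : ℝ → ℝ be differentiable with |x_z'(t)| ≤ γ for all t. Let x_u : [t₀, ∞) → ℝ be differentiable and satisfy x_u'(t) = η(x_u(t) − x_z(t)) for all t ≥ t₀, with initial condition x_u(t₀) = η ∫_{t₀}^∞ e^{−η(τ−t₀)} x_z(τ) dτ. Then for every t ≥ t₀ it holds that x_u(t) = η ∫_{t}^∞ e^{−η(τ−t)} x_z(τ) dτ; i.e., the stability condition, once imposed at t₀, propagates to every later instant. -/

import Mathlib

open MeasureTheory Real

open Filter Asymptotics in
private lemma aux_integrable (η γ : ℝ) (hη : 0 < η) (hγ : 0 ≤ γ) (xz : ℝ → ℝ)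
    (hxz : Differentiable ℝ xz) (hxz' : ∀ t, |deriv xz t| ≤ γ) (a : ℝ) :
    IntegrableOn (fun τ => Real.exp (-η*τ) * xz τ) (Set.Ioi a) := by
  have hb : (0:ℝ) < η/2 := by positivity
  have hlip : LipschitzWith ⟨γ, hγ⟩ xz := by
    apply lipschitzWith_of_nnnorm_deriv_le hxz
    intro x
    change ((‖deriv xz x‖₊ : NNReal) : ℝ) ≤ γ
    simpa using hxz' x
  have hbound : ∀ x : ℝ, |xz x| ≤ |xz 0| + γ * |x| := by
    intro x
    have hb2 := hlip.dist_le_mul x 0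
    simp only [Real.dist_eq, sub_zero, NNReal.coe_mk] at hb2
    have h3 := abs_sub_abs_le_abs_sub (xz x) (xz 0)
    change |xz x - xz 0| ≤ γ * |x| at hb2
    linarith
  have t1 : Tendsto (fun x : ℝ => x * Real.exp (-(η/2)*x)) atTop (nhds 0) := by
    have h0 := tendsto_pow_mul_exp_neg_atTop_nhds_zero 1
    have hcomp : Tendsto (fun x : ℝ => (η/2*x) ^ 1 * Real.exp (-(η/2*x))) atTop (nhds 0) :=
      h0.comp (tendsto_id.const_mul_atTop hb)
    have := hcomp.const_mul (2/η)
    simp only [mul_zero] at this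
    convert this using 2 with x
    field_simp
  have t2 : Tendsto (fun x : ℝ => Real.exp (-(η/2)*x)) atTop (nhds 0) := by
    have : Tendsto (fun x : ℝ => -(η/2)*x) atTop atBot := by
      apply Tendsto.const_mul_atTop_of_neg (by linarith : -(η/2) < 0) tendsto_id
    exact Real.tendsto_exp_atBot.comp this
  have key : Tendsto (fun x => Real.exp (-(η/2)*x) * xz x) atTop (nhds 0) := by
    refine squeeze_zero_norm' (a := fun x => |xz 0| * Real.exp (-(η/2)*x) + γ * (x * Real.exp (-(η/2)*x))) ?_ ?_
    · filter_upwards [eventually_ge_atTop (0:ℝ)] with x hx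
      have h1 := hbound x
      have h2 : |x| = x := abs_of_nonneg hx
      have h3 : (0:ℝ) < Real.exp (-(η/2)*x) := Real.exp_pos _
      rw [Real.norm_eq_abs, abs_mul, abs_of_pos h3]
      rw [h2] at h1
      nlinarith
    · have := (t2.const_mul |xz 0|).add (t1.const_mul γ)
      simpa using this
  have hO : (fun x => Real.exp (-η*x) * xz x) =O[atTop] fun x => Real.exp (-(η/2)*x) := by
    have h1 : (fun x => Real.exp (-(η/2)*x) * xz x) =O[atTop] (fun _ : ℝ => (1:ℝ)) :=
      key.isBigO_one ℝ
    have h2 := (isBigO_refl (fun x : ℝ => Real.exp (-(η/2)*x)) atTop).mul h1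
    simp only [mul_one] at h2
    refine h2.congr' (Eventually.of_forall fun x => ?_) (EventuallyEq.refl _ _)
    dsimp only
    rw [show (-η*x) = (-(η/2)*x) + (-(η/2)*x) by ring, Real.exp_add, mul_assoc]
  have hcont : Continuous (fun τ => Real.exp (-η*τ) * xz τ) :=
    (Real.continuous_exp.comp (by continuity)).mul hxz.continuous
  exact integrable_of_isBigO_exp_neg hb hcont.continuousOn hO

/-- If `x_u' = η(x_u − x_z)` for `t ≥ t₀`, `x_z` has derivative bounded by `γ`,
and the stability condition `x_u(t₀) = η ∫_{t₀}^∞ e^{−η(τ−t₀)} x_z(τ) dτ` holds at `t₀`,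
then it propagates: `x_u(t) = η ∫_{t}^∞ e^{−η(τ−t)} x_z(τ) dτ` for every `t ≥ t₀`. -/
theorem stmt_1 (η γ t₀ : ℝ) (hη : 0 < η) (hγ : 0 ≤ γ)
    (xz xu : ℝ → ℝ)
    (hxz : Differentiable ℝ xz) (hxz' : ∀ t, |deriv xz t| ≤ γ)
    (hode : ∀ t, t₀ ≤ t → HasDerivAt xu (η * (xu t - xz t)) t)
    (hinit : xu t₀ = η * ∫ τ in Set.Ioi t₀, Real.exp (-η * (τ - t₀)) * xz τ) :
    ∀ t, t₀ ≤ t → xu t = η * ∫ τ in Set.Ioi t, Real.exp (-η * (τ - t)) * xz τ := by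
  set f : ℝ → ℝ := fun τ => Real.exp (-η*τ) * xz τ with hf
  have hcont : Continuous f := (Real.continuous_exp.comp (by continuity)).mul hxz.continuous
  have hint : ∀ a : ℝ, IntegrableOn f (Set.Ioi a) :=
    fun a => aux_integrable η γ hη hγ xz hxz hxz' a
  -- rewrite the shifted integrals
  have hshift : ∀ t : ℝ, (∫ τ in Set.Ioi t, Real.exp (-η * (τ - t)) * xz τ)
      = Real.exp (η*t) * ∫ τ in Set.Ioi t, f τ := by
    intro t
    rw [← integral_const_mul]
    apply setIntegral_congr_fun measurableSet_Ioi
    intro τ _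
    simp only [hf]
    rw [← mul_assoc, ← Real.exp_add]
    ring_nf
  -- the combined function
  set ψ : ℝ → ℝ := fun t => Real.exp (-η*t) * xu t + η * ∫ τ in t₀..t, f τ with hψ
  have hψ' : ∀ t, t₀ ≤ t → HasDerivAt ψ 0 t := by
    intro t ht
    have h1 : HasDerivAt (fun s => Real.exp (-η*s)) (Real.exp (-η*t) * (-η)) t := by
      simpa using ((hasDerivAt_id t).const_mul (-η)).exp
    have h2 := h1.mul (hode t ht)
    have h3 : HasDerivAt (fun s => ∫ τ in t₀..s, f τ) (f t) t :=
      intervalIntegral.integral_hasDerivAt_right (hcont.intervalIntegrable _ _)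
        hcont.stronglyMeasurable.stronglyMeasurableAtFilter hcont.continuousAt
    have h4 := h2.add ((h3.const_mul η))
    refine h4.congr_deriv ?_
    simp only [hf]
    ring
  have hconst : ∀ t, t₀ ≤ t → ψ t = ψ t₀ := by
    intro t ht
    exact constant_of_has_deriv_right_zero
      (fun x hx => ((hψ' x hx.1).continuousAt).continuousWithinAt)
      (fun x hx => (hψ' x hx.1).hasDerivWithinAt) t ⟨ht, le_rfl⟩
  intro t ht
  have hsplit : (∫ τ in Set.Ioi t₀, f τ) = (∫ τ in t₀..t, f τ) + ∫ τ in Set.Ioi t, f τ := by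
    rw [intervalIntegral.integral_of_le ht, ← setIntegral_union
      (Set.Ioc_disjoint_Ioi le_rfl) measurableSet_Ioi
      ((hint t₀).mono_set Set.Ioc_subset_Ioi_self) (hint t),
      Set.Ioc_union_Ioi_eq_Ioi ht]
  have h0 : ψ t = ψ t₀ := hconst t ht
  have hψt₀ : ψ t₀ = η * ∫ τ in Set.Ioi t₀, f τ := by
    simp only [hψ, intervalIntegral.integral_same, mul_zero, add_zero, hinit, hshift t₀]
    rw [show Real.exp (-η*t₀) * (η * (Real.exp (η*t₀) * ∫ τ in Set.Ioi t₀, f τ))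
        = (Real.exp (-η*t₀) * Real.exp (η*t₀)) * (η * ∫ τ in Set.Ioi t₀, f τ) by ring,
      ← Real.exp_add]
    simp
  have hexp : Real.exp (-η*t) ≠ 0 := (Real.exp_pos _).ne'
  rw [hshift t]
  have : Real.exp (-η*t) * xu t = η * ∫ τ in Set.Ioi t, f τ := by
    have := h0.trans hψt₀
    simp only [hψ] at this
    rw [hsplit] at this
    linarith
  have hee : Real.exp (η*t) * Real.exp (-η*t) = 1 := by
    rw [← Real.exp_add]; ring_nf; exact Real.exp_zero
  calc xu t = (Real.exp (η*t) * Real.exp (-η*t)) * xu t := by rw [hee]; ring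
    _ = Real.exp (η*t) * (Real.exp (-η*t) * xu t) := by ring
    _ = Real.exp (η*t) * (η * ∫ τ in Set.Ioi t, f τ) := by rw [this]
    _ = η * (Real.exp (η*t) * ∫ τ in Set.Ioi t, f τ) := by ring
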